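/- Let X be a Banach space and A : X → X* a bounded symmetric linear operator. If A is Fredholm of index zero and X₀ is a closed complement of Ker A in X, then the range of A equals the annihilator of Ker A in X* (identified with X₀* under X* = X₀* ⊕ (Ker A)*). -/

import Mathlib

set_option maxHeartbeats 1000000


/-- If `A : X →L X*` is a bounded symmetric operator on a Banach space that is Fredholm with
index zero (finite-dimensional kernel, closed range, finite-dimensional cokernel of the same
dimension as the kernel), and `X₀` is a closed complement of `Ker A` in `X`, then the range of
`A` equals the annihilator of `Ker A` in `X*` (which is identified with `X₀*` under the
decomposition `X* = X₀* ⊕ (Ker A)*`). -/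
theorem range_symmetric_fredholm_eq_annihilator {𝕜 X : Type*} [RCLike 𝕜]
    [NormedAddCommGroup X] [NormedSpace 𝕜 X] [CompleteSpace X]
    (A : X →L[𝕜] StrongDual 𝕜 X)
    (hA : ∀ x y : X, A x y = A y x)
    (hker : FiniteDimensional 𝕜 (LinearMap.ker (A : X →ₗ[𝕜] StrongDual 𝕜 X)))
    (hclosed : IsClosed ((LinearMap.range (A : X →ₗ[𝕜] StrongDual 𝕜 X) : Submodule 𝕜 (StrongDual 𝕜 X)) :
        Set (StrongDual 𝕜 X)))
    (hcoker : FiniteDimensional 𝕜 (StrongDual 𝕜 X ⧸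
        (LinearMap.range (A : X →ₗ[𝕜] StrongDual 𝕜 X) : Submodule 𝕜 (StrongDual 𝕜 X))))
    (hindex : Module.finrank 𝕜 (LinearMap.ker (A : X →ₗ[𝕜] StrongDual 𝕜 X))
      = Module.finrank 𝕜 (StrongDual 𝕜 X ⧸
          (LinearMap.range (A : X →ₗ[𝕜] StrongDual 𝕜 X) : Submodule 𝕜 (StrongDual 𝕜 X))))
    (X₀ : Submodule 𝕜 X) (hX₀ : IsClosed (X₀ : Set X))
    (hcompl : IsCompl X₀ (LinearMap.ker (A : X →ₗ[𝕜] StrongDual 𝕜 X))) :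
    ((LinearMap.range (A : X →ₗ[𝕜] StrongDual 𝕜 X) : Submodule 𝕜 (StrongDual 𝕜 X)) : Set (StrongDual 𝕜 X))
      = {α : StrongDual 𝕜 X | ∀ ξ ∈ LinearMap.ker (A : X →ₗ[𝕜] StrongDual 𝕜 X), α ξ = 0} := by
  classical
  set K := LinearMap.ker (A : X →ₗ[𝕜] StrongDual 𝕜 X) with hK
  -- restriction map to the algebraic dual of K
  set restr : StrongDual 𝕜 X →ₗ[𝕜] Module.Dual 𝕜 K :=
    (K.subtype.dualMap).comp (ContinuousLinearMap.coeLM 𝕜) with hrestr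
  have hrestr_apply : ∀ (α : StrongDual 𝕜 X) (ξ : K), restr α ξ = α ξ := fun _ _ => rfl
  -- restr is surjective by Hahn–Banach (functionals on findim K are continuous)
  have hsurj : Function.Surjective restr := by
    intro f
    obtain ⟨g, hg, -⟩ := exists_extension_norm_eq K (LinearMap.toContinuousLinearMap f)
    refine ⟨g, ?_⟩
    ext ξ
    simpa [hrestr_apply] using hg ξ
  set S := LinearMap.ker restr with hS
  -- the target set is S
  have hset : {α : StrongDual 𝕜 X | ∀ ξ ∈ K, α ξ = 0} = (S : Set (StrongDual 𝕜 X)) := by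
    ext α
    constructor
    · intro h
      simp only [hS, SetLike.mem_coe, LinearMap.mem_ker]
      ext ξ
      exact h ξ ξ.2
    · intro h ξ hξ
      have := congrArg (fun f : Module.Dual 𝕜 K => f ⟨ξ, hξ⟩) h
      simpa [hrestr_apply] using this
  -- range A ≤ S
  have hle : LinearMap.range (A : X →ₗ[𝕜] StrongDual 𝕜 X) ≤ S := by
    rintro α ⟨x, rfl⟩
    simp only [hS, LinearMap.mem_ker]
    ext ξ
    have hξ : (ξ : X) ∈ K := ξ.2
    have : A (ξ : X) = 0 := hξ
    calc restr (A x) ξ = A x ξ := rfl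
      _ = A (ξ : X) x := hA x ξ
      _ = 0 := by rw [this]; rfl
  set R : Submodule 𝕜 (StrongDual 𝕜 X) := LinearMap.range (A : X →ₗ[𝕜] StrongDual 𝕜 X) with hR
  have hleRS : R ≤ S := hle
  -- finrank of X* / S = finrank K
  have e1 : (StrongDual 𝕜 X ⧸ S) ≃ₗ[𝕜] Module.Dual 𝕜 K :=
    restr.quotKerEquivOfSurjective hsurj
  have hfdS : FiniteDimensional 𝕜 (StrongDual 𝕜 X ⧸ S) :=
    Module.Finite.equiv e1.symm
  have hrkS : Module.finrank 𝕜 (StrongDual 𝕜 X ⧸ S) = Module.finrank 𝕜 K := by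
    rw [e1.finrank_eq]
    exact Subspace.dual_finrank_eq
  -- induced surjection (X*/R) → (X*/S)
  set q : (StrongDual 𝕜 X ⧸ R) →ₗ[𝕜] (StrongDual 𝕜 X ⧸ S) :=
    Submodule.mapQ R S LinearMap.id hleRS with hq
  have hqsurj : Function.Surjective q := by
    intro y
    obtain ⟨α, rfl⟩ := S.mkQ_surjective y
    exact ⟨R.mkQ α, rfl⟩
  have hrkRS : Module.finrank 𝕜 (StrongDual 𝕜 X ⧸ R)
      = Module.finrank 𝕜 (StrongDual 𝕜 X ⧸ S) := by
    rw [← hindex, hrkS]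
  have hqinj : Function.Injective q :=
    (LinearMap.injective_iff_surjective_of_finrank_eq_finrank hrkRS).mpr hqsurj
  -- conclude S ≤ R
  have hSR : S ≤ R := by
    intro α hα
    have h0 : q (R.mkQ α) = 0 := by
      have : q (R.mkQ α) = S.mkQ α := rfl
      rw [this, Submodule.mkQ_apply, Submodule.Quotient.mk_eq_zero]
      exact hα
    have : R.mkQ α = 0 := hqinj (by simpa using h0)
    rwa [Submodule.mkQ_apply, Submodule.Quotient.mk_eq_zero] at this
  have : R = S := le_antisymm hleRS hSR
  rw [hset]
  exact congrArg SetLike.coe this
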